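/- Let γ : ℝ^d → ℝ be a continuous variogram and fix η ∈ ℝ^d. Then the function ξ ↦ γ(ξ + η) + γ(ξ − η) − 2γ(ξ) is a continuous positive definite function on ℝ^d. -/
import Mathlib


open scoped BigOperators

/-- A variogram on `ℝ^d`: nonnegative at the origin, even, and conditionally negative
definite (for complex weights summing to zero, the quadratic form is real and `≤ 0`). -/
def IsVariogram {d : ℕ} (γ : EuclideanSpace ℝ (Fin d) → ℝ) : Prop :=
  0 ≤ γ 0 ∧ (∀ ξ, γ (-ξ) = γ ξ) ∧
    ∀ (n : ℕ) (ξ : Fin n → EuclideanSpace ℝ (Fin d)) (a : Fin n → ℂ),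
      (∑ i, a i) = 0 →
      (∑ i, ∑ j, a i * (γ (ξ i - ξ j) : ℂ) * (starRingEnd ℂ) (a j)).im = 0 ∧
      (∑ i, ∑ j, a i * (γ (ξ i - ξ j) : ℂ) * (starRingEnd ℂ) (a j)).re ≤ 0

/-- A (real-valued) positive definite function on ℝ^d: for all complex weights the
quadratic form is real and nonnegative. -/
def IsPosDefFn {d : ℕ} (C : EuclideanSpace ℝ (Fin d) → ℝ) : Prop :=
  ∀ (n : ℕ) (ξ : Fin n → EuclideanSpace ℝ (Fin d)) (a : Fin n → ℂ),
    (∑ i, ∑ j, a i * (C (ξ i - ξ j) : ℂ) * (starRingEnd ℂ) (a j)).im = 0 ∧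
    0 ≤ (∑ i, ∑ j, a i * (C (ξ i - ξ j) : ℂ) * (starRingEnd ℂ) (a j)).re

/-- If γ is a continuous variogram and η is fixed, then
ξ ↦ γ(ξ+η) + γ(ξ−η) − 2γ(ξ) is a continuous positive definite function. -/
theorem stmt11 {d : ℕ} (γ : EuclideanSpace ℝ (Fin d) → ℝ)
    (hγ : IsVariogram γ) (hc : Continuous γ) (η : EuclideanSpace ℝ (Fin d)) :
    Continuous (fun ξ : EuclideanSpace ℝ (Fin d) => γ (ξ + η) + γ (ξ - η) - 2 * γ ξ) ∧
    IsPosDefFn (fun ξ : EuclideanSpace ℝ (Fin d) => γ (ξ + η) + γ (ξ - η) - 2 * γ ξ) := by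
  constructor
  · exact ((hc.comp (continuous_id.add continuous_const)).add
      (hc.comp (continuous_id.sub continuous_const))).sub (continuous_const.mul hc)
  intro n ξ a
  set ξ' : Fin (n + n) → EuclideanSpace ℝ (Fin d) :=
    Fin.addCases ξ (fun i => ξ i + η) with hξ'
  set a' : Fin (n + n) → ℂ := Fin.addCases a (fun i => -a i) with ha'
  have hsum : (∑ i, a' i) = 0 := by
    rw [Fin.sum_univ_add]
    simp [ha', -Fin.natAdd_eq_addNat]
  obtain ⟨him, hre⟩ := hγ.2.2 (n + n) ξ' a' hsum
  have key : (∑ i, ∑ j, a' i * (γ (ξ' i - ξ' j) : ℂ) * (starRingEnd ℂ) (a' j))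
      = -(∑ i, ∑ j, a i *
          ((γ ((ξ i - ξ j) + η) + γ ((ξ i - ξ j) - η) - 2 * γ (ξ i - ξ j) : ℝ) : ℂ)
          * (starRingEnd ℂ) (a j)) := by
    rw [Fin.sum_univ_add, ← Finset.sum_neg_distrib, ← Finset.sum_add_distrib]
    refine Finset.sum_congr rfl fun i _ => ?_
    rw [Fin.sum_univ_add, Fin.sum_univ_add, ← Finset.sum_neg_distrib,
      ← Finset.sum_add_distrib, ← Finset.sum_add_distrib, ← Finset.sum_add_distrib]
    refine Finset.sum_congr rfl fun j _ => ?_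
    simp only [ha', hξ', Fin.addCases_left, Fin.addCases_right, map_neg]
    have h1 : ξ i - (ξ j + η) = (ξ i - ξ j) - η := by abel
    have h2 : (ξ i + η) - ξ j = (ξ i - ξ j) + η := by abel
    have h3 : (ξ i + η) - (ξ j + η) = ξ i - ξ j := by abel
    rw [h1, h2, h3]
    push_cast
    ring
  rw [key] at him hre
  constructor
  · simpa using him
  · simpa using hre
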